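/- Let h ∈ ℤ[x] be monic of degree k ≥ 2 with k−1 roots in (-2, 1/4) and one root in (-6, -2), and suppose f(x) := (-1)^k x^{2k} h((x + 1/x)(1 − x − 1/x)) is irreducible over ℚ. Then f is the minimal polynomial of a Salem number α of degree 4k, and the conjugates of α, labelled in pairs (α_{2j-1}, α_{2j} = 1/α_{2j-1}), satisfy α_{4i-3} + α_{4i-2} + α_{4i-1} + α_{4i} = 1 for each i = 1, ..., k. -/

import Mathlib

open Polynomial

/-- A Salem number: a real algebraic integer `α > 1` whose other conjugates over ℚ
all lie in the closed unit disc, with at least one conjugate on the unit circle. -/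
def IsSalem (α : ℝ) : Prop :=
  1 < α ∧ IsIntegral ℤ α ∧
  (∀ z : ℂ, aeval z (minpoly ℚ α) = 0 → z ≠ (α : ℂ) → ‖z‖ ≤ 1) ∧
  (∃ z : ℂ, aeval z (minpoly ℚ α) = 0 ∧ ‖z‖ = 1)

noncomputable def zc (y : ℝ) : ℂ := ⟨y/2 + Real.sqrt (y^2-4)/2, Real.sqrt (4-y^2)/2⟩

lemma zc_quad (y : ℝ) : zc y ^ 2 - (y:ℂ) * zc y + 1 = 0 := by
  have hcase : y^2 ≤ 4 ∨ 4 ≤ y^2 := le_total _ _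
  apply Complex.ext <;>
  · simp only [zc, Complex.add_re, Complex.add_im, Complex.sub_re, Complex.sub_im,
      Complex.mul_re, Complex.mul_im,
      Complex.one_re, Complex.one_im, Complex.ofReal_re, Complex.ofReal_im, pow_two,
      Complex.zero_re, Complex.zero_im]
    rcases hcase with hc | hc
    · have h1 : Real.sqrt (y*y-4) = 0 := Real.sqrt_eq_zero'.mpr (by nlinarith)
      have h2 : Real.sqrt (4-y*y) * Real.sqrt (4-y*y) = 4 - y*y := Real.mul_self_sqrt (by nlinarith)
      rw [h1]; nlinarith [h2]
    · have h1 : Real.sqrt (4-y*y) = 0 := Real.sqrt_eq_zero'.mpr (by nlinarith)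
      have h2 : Real.sqrt (y*y-4) * Real.sqrt (y*y-4) = y*y - 4 := Real.mul_self_sqrt (by nlinarith)
      rw [h1]; nlinarith [h2]

lemma zc_ne_zero (y : ℝ) : zc y ≠ 0 := by
  intro h
  have := zc_quad y
  rw [h] at this
  simp at this

lemma zc_inv (y : ℝ) : (zc y)⁻¹ = (y:ℂ) - zc y := by
  have hq := zc_quad y
  apply inv_eq_of_mul_eq_one_right
  linear_combination -hq

lemma zc_add_inv (y : ℝ) : zc y + (zc y)⁻¹ = (y:ℂ) := by
  rw [zc_inv]; ring

lemma zc_abs_one {y : ℝ} (hy : y^2 ≤ 4) : ‖zc y‖ = 1 := by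
  have h1 : Real.sqrt (y^2-4) = 0 := Real.sqrt_eq_zero'.mpr (by linarith)
  have h2 : Real.sqrt (4-y^2) ^ 2 = 4 - y^2 := Real.sq_sqrt (by linarith)
  have : Complex.normSq (zc y) = 1 := by
    simp only [Complex.normSq_mk, zc, h1]
    nlinarith
  rw [← Complex.sq_norm] at this
  nlinarith [norm_nonneg (zc y)]

lemma zc_real {y : ℝ} (hy : 2 ≤ y) : zc y = ((y/2 + Real.sqrt (y^2-4)/2 : ℝ) : ℂ) := by
  have h1 : Real.sqrt (4-y^2) = 0 := Real.sqrt_eq_zero'.mpr (by nlinarith)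
  apply Complex.ext <;> simp [zc, h1]

lemma zc_real_gt {y : ℝ} (hy : 2 < y) : 1 < y/2 + Real.sqrt (y^2-4)/2 := by
  have := Real.sqrt_nonneg (y^2-4)
  linarith

lemma zc_ne_inv {y : ℝ} (hy : y^2 ≠ 4) : zc y ≠ (zc y)⁻¹ := by
  intro he
  have hq := zc_quad y
  rw [zc_inv] at he
  have h2 : (2:ℂ) * zc y = (y:ℂ) := by linear_combination he
  have hz : zc y = (y:ℂ)/2 := by
    field_simp at h2 ⊢; linear_combination h2
  rw [hz] at hq
  have : (y:ℂ)^2 = 4 := by linear_combination -4*hq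
  have : (y:ℝ)^2 = 4 := by exact_mod_cast this
  exact hy this

lemma quad_factor {w : ℂ} {y : ℝ} (hw : w^2 - (y:ℂ)*w + 1 = 0) :
    w = zc y ∨ w = (zc y)⁻¹ := by
  have h1 : (w - zc y) * (w - (zc y)⁻¹) = 0 := by
    rw [zc_inv]
    have := zc_quad y
    ring_nf
    ring_nf at hw this
    linear_combination hw - this
  rcases mul_eq_zero.mp h1 with h | h
  · left; exact sub_eq_zero.mp h
  · right; exact sub_eq_zero.mp h

noncomputable def ypc (c : ℝ) : ℝ := (1 + Real.sqrt (1-4*c))/2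
noncomputable def ymc (c : ℝ) : ℝ := (1 - Real.sqrt (1-4*c))/2

lemma yp_add_ym (c : ℝ) : ypc c + ymc c = 1 := by unfold ypc ymc; ring

lemma yp_mul_ym {c : ℝ} (hc : c ≤ 1/4) : ypc c * ymc c = c := by
  unfold ypc ymc
  have h2 : Real.sqrt (1-4*c) * Real.sqrt (1-4*c) = 1-4*c := Real.mul_self_sqrt (by linarith)
  nlinarith [h2]

lemma ym_lt_yp {c : ℝ} (hc : c < 1/4) : ymc c < ypc c := by
  unfold ypc ymc
  have : 0 < Real.sqrt (1-4*c) := Real.sqrt_pos.mpr (by linarith)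
  linarith

lemma yp_inj {c c' : ℝ} (hc : c ≤ 1/4) (hc' : c' ≤ 1/4) (he : ypc c = ypc c') : c = c' := by
  unfold ypc at he
  have h : Real.sqrt (1-4*c) = Real.sqrt (1-4*c') := by linarith
  have h2 : Real.sqrt (1-4*c) * Real.sqrt (1-4*c) = 1-4*c := Real.mul_self_sqrt (by linarith)
  have h3 : Real.sqrt (1-4*c') * Real.sqrt (1-4*c') = 1-4*c' := Real.mul_self_sqrt (by linarith)
  rw [h] at h2; linarith [h2, h3]

lemma ym_inj {c c' : ℝ} (hc : c ≤ 1/4) (hc' : c' ≤ 1/4) (he : ymc c = ymc c') : c = c' := by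
  have : ypc c = ypc c' := by
    have := yp_add_ym c; have := yp_add_ym c'; linarith
  exact yp_inj hc hc' this

lemma ym_lt_half_lt_yp {c c' : ℝ} (hc : c < 1/4) (hc' : c' < 1/4) : ymc c' < ypc c := by
  unfold ypc ymc
  have h1 : 0 < Real.sqrt (1-4*c) := Real.sqrt_pos.mpr (by linarith)
  have h2 : 0 < Real.sqrt (1-4*c') := Real.sqrt_pos.mpr (by linarith)
  linarith

lemma yp_bounds0 {c : ℝ} (hc : c ∈ Set.Ioo (-6 : ℝ) (-2)) : 2 < ypc c ∧ ypc c < 3 := by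
  obtain ⟨h1, h2⟩ := hc
  have ha : (3:ℝ) < Real.sqrt (1-4*c) := by
    have : (3:ℝ) = Real.sqrt 9 := by
      rw [show (9:ℝ) = 3^2 by norm_num, Real.sqrt_sq]; norm_num
    rw [this]
    exact Real.sqrt_lt_sqrt (by norm_num) (by linarith)
  have hb : Real.sqrt (1-4*c) < 5 := by
    have : Real.sqrt (1-4*c) < Real.sqrt 25 := Real.sqrt_lt_sqrt (by linarith) (by linarith)
    rwa [show (25:ℝ) = 5^2 by norm_num, Real.sqrt_sq (by norm_num)] at this
  unfold ypc; constructor <;> linarith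

lemma ym_bounds0 {c : ℝ} (hc : c ∈ Set.Ioo (-6 : ℝ) (-2)) : -2 < ymc c ∧ ymc c < -1 := by
  obtain ⟨h1, h2⟩ := yp_bounds0 hc
  have h3 := yp_add_ym c
  constructor <;> linarith

lemma yp_boundsi {c : ℝ} (hc : c ∈ Set.Ioo (-2 : ℝ) (1/4)) : 1/2 < ypc c ∧ ypc c < 2 := by
  obtain ⟨h1, h2⟩ := hc
  have ha : (0:ℝ) < Real.sqrt (1-4*c) := Real.sqrt_pos.mpr (by linarith)
  have hb : Real.sqrt (1-4*c) < 3 := by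
    have : Real.sqrt (1-4*c) < Real.sqrt 9 := Real.sqrt_lt_sqrt (by linarith) (by linarith)
    rwa [show (9:ℝ) = 3^2 by norm_num, Real.sqrt_sq (by norm_num)] at this
  unfold ypc; constructor <;> linarith

lemma ym_boundsi {c : ℝ} (hc : c ∈ Set.Ioo (-2 : ℝ) (1/4)) : -1 < ymc c ∧ ymc c < 1/2 := by
  obtain ⟨h1, h2⟩ := yp_boundsi hc
  have h3 := yp_add_ym c
  constructor <;> linarith

noncomputable def Rpoly : ℤ[X] := (X^2+1)*(X^2 - X + 1)

lemma Rpoly_monic : Rpoly.Monic := by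
  have h1 : (X^2+1 : ℤ[X]).Monic := by monicity!
  have h2 : (X^2 - X + 1 : ℤ[X]).Monic := by monicity!
  exact h1.mul h2

lemma Rpoly_natDegree : Rpoly.natDegree = 4 := by
  have h1 : (X^2+1 : ℤ[X]).natDegree = 2 := by compute_degree!
  have h2 : (X^2 - X + 1 : ℤ[X]).natDegree = 2 := by compute_degree!
  rw [Rpoly, Polynomial.natDegree_mul (by intro hh; simp [hh] at h1) (by intro hh; simp [hh] at h2), h1, h2]

noncomputable def Fpoly (h : ℤ[X]) (k : ℕ) : ℤ[X] :=
  ∑ j ∈ Finset.range (k+1), C ((-1)^(k+j) * h.coeff j) * (X^(2*(k-j)) * Rpoly^j)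

lemma Fpoly_aeval (h : ℤ[X]) (k : ℕ) (hdeg : h.natDegree = k) (x : ℂ) (hx : x ≠ 0) :
    aeval x (Fpoly h k) =
      (-1 : ℂ) ^ k * x ^ (2 * k) * aeval ((x + 1 / x) * (1 - x - 1 / x)) h := by
  set t : ℂ := (x + 1 / x) * (1 - x - 1 / x) with ht
  have key : ((x^2+1)*(x^2-x+1) : ℂ) = (-1) * (x^2 * t) := by
    rw [ht]; field_simp; ring
  have hrhs : aeval t h = ∑ j ∈ Finset.range (k+1), (h.coeff j : ℂ) * t^j := by
    rw [← hdeg, Polynomial.aeval_eq_sum_range]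
    refine Finset.sum_congr rfl fun j _ => ?_
    rw [zsmul_eq_mul]
  rw [hrhs, Fpoly, map_sum, Finset.mul_sum]
  refine Finset.sum_congr rfl fun j hj => ?_
  have hjk : j ≤ k := by have := Finset.mem_range.mp hj; omega
  have hR : aeval x (Rpoly : ℤ[X]) = ((x^2+1)*(x^2-x+1) : ℂ) := by
    simp [Rpoly]
  simp only [map_mul, map_pow, aeval_C, aeval_X]
  rw [hR, key]
  have hxp : x ^ (2*(k-j)) * (x^2)^j = x^(2*k) := by
    rw [← pow_mul, ← pow_add]
    congr 1
    omega
  have hsgn : ((-1:ℂ))^(k+j) * (-1)^j = (-1)^k := by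
    rw [pow_add, mul_assoc, ← mul_pow]
    norm_num
  push_cast
  rw [mul_pow, mul_pow]
  calc ((-1:ℂ))^(k+j) * (h.coeff j : ℂ) * (x ^ (2*(k-j)) * ((-1)^j * ((x^2)^j * t^j)))
      = ((-1:ℂ))^(k+j) * (-1)^j * (h.coeff j : ℂ) * ((x ^ (2*(k-j)) * (x^2)^j) * t^j) := by ring
    _ = (-1:ℂ)^k * x^(2*k) * ((h.coeff j : ℂ) * t^j) := by rw [hsgn, hxp]; ring

lemma Fpoly_tail_natDegree (h : ℤ[X]) (k : ℕ) (j : ℕ) (hj : j < k) :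
    (C ((-1)^(k+j) * h.coeff j) * (X^(2*(k-j)) * Rpoly^j) : ℤ[X]).natDegree ≤ 4*k - 2 := by
  refine (natDegree_mul_le).trans ?_
  have h1 : (X^(2*(k-j)) * Rpoly^j : ℤ[X]).natDegree ≤ 2*(k-j) + 4*j := by
    refine (natDegree_mul_le).trans ?_
    gcongr
    · exact (natDegree_X_pow _).le
    · rw [natDegree_pow, Rpoly_natDegree]; omega
  simp only [natDegree_C, zero_add]
  omega

lemma Fpoly_monic (h : ℤ[X]) (k : ℕ) (hk : 1 ≤ k) (hm : h.Monic) (hdeg : h.natDegree = k) :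
    (Fpoly h k).Monic ∧ (Fpoly h k).natDegree = 4*k := by
  have hck : h.coeff k = 1 := by rw [← hdeg]; exact hm
  have hsplit : Fpoly h k =
      (∑ j ∈ Finset.range k, C ((-1)^(k+j) * h.coeff j) * (X^(2*(k-j)) * Rpoly^j)) + Rpoly^k := by
    rw [Fpoly, Finset.sum_range_succ, hck]
    congr 1
    have : ((-1:ℤ))^(k+k) = 1 := Even.neg_one_pow ⟨k, rfl⟩
    simp [this]
  set S := ∑ j ∈ Finset.range k, C ((-1)^(k+j) * h.coeff j) * (X^(2*(k-j)) * Rpoly^j) with hS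
  have hRk : (Rpoly^k : ℤ[X]).Monic := Rpoly_monic.pow k
  have hRkdeg : (Rpoly^k : ℤ[X]).natDegree = 4*k := by
    rw [natDegree_pow, Rpoly_natDegree]; ring
  have hSdeg : S.natDegree ≤ 4*k - 2 := by
    refine natDegree_sum_le_of_forall_le _ _ fun j hj => ?_
    exact Fpoly_tail_natDegree h k j (Finset.mem_range.mp hj)
  have hdlt : S.degree < (Rpoly^k).degree := by
    rw [degree_eq_natDegree hRk.ne_zero, hRkdeg]
    calc S.degree ≤ (S.natDegree : WithBot ℕ) := degree_le_natDegree
      _ ≤ ((4*k-2 : ℕ) : WithBot ℕ) := by exact_mod_cast hSdeg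
      _ < ((4*k : ℕ) : WithBot ℕ) := by exact_mod_cast (by omega : 4*k-2 < 4*k)
  constructor
  · rw [hsplit]; exact hRk.add_of_right hdlt
  · rw [hsplit, natDegree_eq_of_degree_eq (degree_add_eq_right_of_degree_lt hdlt), hRkdeg]

lemma Fpoly_aeval_zero (h : ℤ[X]) (k : ℕ) (hk : 1 ≤ k) (hck : h.coeff k = 1) :
    aeval (0:ℂ) (Fpoly h k) = 1 := by
  rw [Fpoly, map_sum, Finset.sum_range_succ]
  have h0 : ∀ j ∈ Finset.range k,
      aeval (0:ℂ) (C ((-1)^(k+j) * h.coeff j) * (X^(2*(k-j)) * Rpoly^j)) = 0 := by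
    intro j hj
    have hne : 2*(k-j) ≠ 0 := by have := Finset.mem_range.mp hj; omega
    simp [zero_pow hne]
  rw [Finset.sum_eq_zero h0, hck, zero_add]
  have he : ((-1:ℤ))^(k+k) = 1 := Even.neg_one_pow ⟨k, rfl⟩
  simp [he, Rpoly]

lemma roots_classify (h : ℤ[X]) (k : ℕ) (hm : h.Monic) (hdeg : h.natDegree = k)
    (r : Fin k → ℝ) (hinj : Function.Injective r) (hroots : ∀ i, aeval (r i) h = 0) :
    ∀ t : ℂ, aeval t h = 0 → ∃ i, t = ((r i : ℝ) : ℂ) := by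
  intro t htt
  have hmapm : (h.map (algebraMap ℤ ℂ)).Monic := hm.map _
  have hne : h.map (algebraMap ℤ ℂ) ≠ 0 := hmapm.ne_zero
  set M : Multiset ℂ := Finset.univ.val.map (fun i : Fin k => ((r i : ℝ) : ℂ)) with hM
  have hMnodup : M.Nodup := by
    refine Multiset.Nodup.map ?_ Finset.univ.nodup
    intro i j hij
    exact hinj (Complex.ofReal_injective (by simpa using hij))
  have hrootsC : ∀ i : Fin k, ((r i : ℝ) : ℂ) ∈ (h.map (algebraMap ℤ ℂ)).roots := by
    intro i
    rw [Polynomial.mem_roots hne, Polynomial.IsRoot, eval_map_algebraMap,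
      show ((r i : ℝ) : ℂ) = algebraMap ℝ ℂ (r i) from rfl, aeval_algebraMap_eq_zero_iff]
    exact hroots i
  have hMle : M ≤ (h.map (algebraMap ℤ ℂ)).roots := by
    rw [Multiset.le_iff_count]
    intro z
    by_cases hzM : z ∈ M
    · rw [Multiset.count_eq_one_of_mem hMnodup hzM]
      obtain ⟨i, _, hi⟩ := Multiset.mem_map.mp hzM
      rw [← hi]
      exact Multiset.one_le_count_iff_mem.mpr (hrootsC i)
    · rw [Multiset.count_eq_zero_of_notMem hzM]; exact Nat.zero_le _
  have hcardM : Multiset.card M = k := by rw [hM]; simp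
  have hcardR : Multiset.card (h.map (algebraMap ℤ ℂ)).roots ≤ k := by
    refine (Polynomial.card_roots' _).trans ?_
    exact Polynomial.natDegree_map_le.trans (le_of_eq hdeg)
  have hMeq : M = (h.map (algebraMap ℤ ℂ)).roots :=
    Multiset.eq_of_le_of_card_le hMle (by rw [hcardM]; exact hcardR)
  have htmem : t ∈ (h.map (algebraMap ℤ ℂ)).roots := by
    rw [Polynomial.mem_roots hne, Polynomial.IsRoot, eval_map_algebraMap]
    exact htt
  rw [← hMeq] at htmem
  obtain ⟨i, _, hi⟩ := Multiset.mem_map.mp htmem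
  exact ⟨i, hi.symm⟩

set_option maxHeartbeats 1000000 in
/-- Lemma: if `h ∈ ℤ[x]` is monic of degree `k ≥ 2` with `k-1` roots in
`(-2,1/4)` and one root in `(-6,-2)`, and `f(x) = (-1)^k x^{2k} h((x+1/x)(1-x-1/x))`
is irreducible over ℚ, then `f` is the minimal polynomial of a Salem number `α` of
degree `4k` whose conjugates, labelled in pairs `a (2j+1) = (a (2j))⁻¹` with `a 0 = α`,
satisfy `a (4i) + a (4i+1) + a (4i+2) + a (4i+3) = 1` for each `i`. -/
theorem salem_construction_quadruple_relation (h : ℤ[X]) (k : ℕ) (hk : 2 ≤ k)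
    (hmonic : h.Monic) (hdeg : h.natDegree = k)
    (r : Fin k → ℝ) (hinj : Function.Injective r)
    (hroots : ∀ i, aeval (r i) h = 0)
    (hr0 : r ⟨0, by omega⟩ ∈ Set.Ioo (-6 : ℝ) (-2))
    (hri : ∀ i : Fin k, i.1 ≠ 0 → r i ∈ Set.Ioo (-2 : ℝ) (1 / 4))
    (f : ℤ[X])
    (hf : ∀ x : ℂ, x ≠ 0 → aeval x f =
      (-1 : ℂ) ^ k * x ^ (2 * k) * aeval ((x + 1 / x) * (1 - x - 1 / x)) h)
    (hirr : Irreducible (f.map (algebraMap ℤ ℚ))) :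
    ∃ α : ℝ, IsSalem α ∧ minpoly ℚ α = f.map (algebraMap ℤ ℚ) ∧
      (minpoly ℚ α).natDegree = 4 * k ∧
      ∃ a : Fin (4 * k) → ℂ, Function.Injective a ∧
        (∀ i, aeval (a i) (minpoly ℚ α) = 0) ∧
        a ⟨0, by omega⟩ = (α : ℂ) ∧
        (∀ j : Fin (2 * k), a ⟨2 * j.1 + 1, by have := j.isLt; omega⟩ =
          (a ⟨2 * j.1, by have := j.isLt; omega⟩)⁻¹) ∧
        (∀ i : Fin k,
          a ⟨4 * i.1, by have := i.isLt; omega⟩ +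
          a ⟨4 * i.1 + 1, by have := i.isLt; omega⟩ +
          a ⟨4 * i.1 + 2, by have := i.isLt; omega⟩ +
          a ⟨4 * i.1 + 3, by have := i.isLt; omega⟩ = 1) := by
  classical
  have hk0 : 0 < k := by omega
  set i0 : Fin k := ⟨0, hk0⟩ with hi0def
  have hr0' : r i0 ∈ Set.Ioo (-6 : ℝ) (-2) := hr0
  have hrlt : ∀ i : Fin k, r i < 1/4 := by
    intro i
    by_cases hi : i.1 = 0
    · have : i = i0 := Fin.ext hi
      rw [this]; have := hr0'.2; linarith
    · exact (hri i hi).2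
  have hrle : ∀ i : Fin k, r i ≤ 1/4 := fun i => (hrlt i).le
  -- f = Fpoly h k
  have hfF : f = Fpoly h k := by
    have hD : (f - Fpoly h k).map (algebraMap ℤ ℂ) = 0 := by
      apply Polynomial.eq_zero_of_infinite_isRoot
      have hinf : ({x : ℂ | x ≠ 0}).Infinite := by
        have : ({0}ᶜ : Set ℂ).Infinite := (Set.finite_singleton 0).infinite_compl
        simpa [Set.compl_def] using this
      refine hinf.mono ?_
      intro x hx
      simp only [Set.mem_setOf_eq] at hx ⊢
      show Polynomial.IsRoot _ x
      rw [Polynomial.IsRoot, eval_map_algebraMap, map_sub, hf x hx,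
        Fpoly_aeval h k hdeg x hx, sub_self]
    have hinjZ : Function.Injective (algebraMap ℤ ℂ) :=
      fun a b hab => Int.cast_injective (α := ℂ) (by simpa using hab)
    have := (Polynomial.map_eq_zero_iff hinjZ).mp hD
    exact sub_eq_zero.mp this
  obtain ⟨hFm, hFd⟩ := Fpoly_monic h k (by omega) hmonic hdeg
  have hfmonic : f.Monic := by rw [hfF]; exact hFm
  have hfdeg : f.natDegree = 4*k := by rw [hfF]; exact hFd
  -- indexing
  have hidxlt : ∀ n : Fin (4*k), n.1/4 < k := fun n => by have := n.isLt; omega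
  set idx : Fin (4*k) → Fin k := fun n => ⟨n.1/4, hidxlt n⟩ with hidxdef
  set Yv : Fin (4*k) → ℝ :=
    fun n => if n.1 % 4 < 2 then ypc (r (idx n)) else ymc (r (idx n)) with hYdef
  set a : Fin (4*k) → ℂ :=
    fun n => if n.1 % 2 = 0 then zc (Yv n) else (zc (Yv n))⁻¹ with hadef
  have hidxcomp : ∀ (n : Fin (4*k)) (i : Fin k), n.1/4 = i.1 → idx n = i :=
    fun n i hni => by rw [hidxdef]; exact Fin.ext hni
  have hYcomp : ∀ n : Fin (4*k),
      Yv n = if n.1 % 4 < 2 then ypc (r (idx n)) else ymc (r (idx n)) := fun n => by rw [hYdef]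
  have haval : ∀ n : Fin (4*k),
      a n = if n.1 % 2 = 0 then zc (Yv n) else (zc (Yv n))⁻¹ := fun n => by rw [hadef]
  -- basic a facts
  have hane : ∀ n, a n ≠ 0 := by
    intro n; rw [haval n]; split
    · exact zc_ne_zero _
    · exact inv_ne_zero (zc_ne_zero _)
  have hainv : ∀ n, a n + (a n)⁻¹ = ((Yv n : ℝ) : ℂ) := by
    intro n; rw [haval n]; split
    · exact zc_add_inv _
    · rw [inv_inv, add_comm]; exact zc_add_inv _
  -- case analysis on Yv
  have hYcase : ∀ n : Fin (4*k),
      (n.1 < 2 ∧ Yv n = ypc (r i0) ∧ 2 < Yv n ∧ Yv n < 3) ∨ ((Yv n)^2 < 4) := by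
    intro n
    rw [hYcomp n]
    by_cases h4 : n.1 % 4 < 2
    · rw [if_pos h4]
      by_cases hz : n.1 / 4 = 0
      · left
        have hidx0 : idx n = i0 := hidxcomp n i0 hz
        obtain ⟨hb1, hb2⟩ := yp_bounds0 hr0'
        rw [hidx0]
        exact ⟨by omega, rfl, hb1, hb2⟩
      · right
        have hne0 : (idx n).1 ≠ 0 := by
          rw [hidxdef]; exact hz
        obtain ⟨hb1, hb2⟩ := yp_boundsi (hri (idx n) hne0)
        nlinarith
    · rw [if_neg h4]
      by_cases hz : n.1 / 4 = 0
      · right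
        have hidx0 : idx n = i0 := hidxcomp n i0 hz
        obtain ⟨hb1, hb2⟩ := ym_bounds0 hr0'
        rw [hidx0]; nlinarith
      · right
        have hne0 : (idx n).1 ≠ 0 := by
          rw [hidxdef]; exact hz
        obtain ⟨hb1, hb2⟩ := ym_boundsi (hri (idx n) hne0)
        nlinarith
  have hYsq : ∀ n : Fin (4*k), (Yv n)^2 ≠ 4 := by
    intro n
    rcases hYcase n with ⟨_, _, hb1, hb2⟩ | hb
    · nlinarith
    · nlinarith
  -- every a n is a root of f
  have haroot : ∀ n, aeval (a n) f = 0 := by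
    intro n
    rw [hf (a n) (hane n)]
    have h1n : (1:ℂ) / a n = (a n)⁻¹ := one_div _
    have hsum : a n + 1 / a n = ((Yv n : ℝ) : ℂ) := by rw [h1n]; exact hainv n
    have hYmul : (Yv n) * (1 - Yv n) = r (idx n) := by
      rw [hYcomp n]
      have h3 := yp_add_ym (r (idx n))
      have h4 := yp_mul_ym (hrle (idx n))
      split
      · linear_combination h4 - ypc (r (idx n)) * h3
      · linear_combination h4 - ymc (r (idx n)) * h3
    have ht : (a n + 1/a n) * (1 - a n - 1/a n) = ((r (idx n) : ℝ) : ℂ) := by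
      have h2 : (1 : ℂ) - a n - 1/a n = 1 - (a n + 1/a n) := by ring
      rw [h2, hsum, ← hYmul]
      push_cast
      ring
    rw [ht]
    have hz0 : aeval ((r (idx n) : ℝ) : ℂ) h = 0 := by
      rw [show ((r (idx n):ℝ):ℂ) = algebraMap ℝ ℂ (r (idx n)) from rfl,
        aeval_algebraMap_eq_zero_iff]
      exact hroots _
    rw [hz0, mul_zero]
  -- classification of all roots of f
  have hclass : ∀ w : ℂ, aeval w f = 0 → ∃ n : Fin (4*k), w = a n := by
    intro w hw
    have hw0 : w ≠ 0 := by
      intro h0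
      rw [h0, hfF, Fpoly_aeval_zero h k (by omega) (by rw [← hdeg]; exact hmonic)] at hw
      exact one_ne_zero hw
    have hth : aeval ((w + 1/w) * (1 - w - 1/w)) h = 0 := by
      have h1 := (hf w hw0).symm.trans hw
      rcases mul_eq_zero.mp h1 with h2 | h2
      · exact absurd h2 (mul_ne_zero (pow_ne_zero _ (by norm_num)) (pow_ne_zero _ hw0))
      · exact h2
    obtain ⟨i, hi⟩ := roots_classify h k hmonic hdeg r hinj hroots _ hth
    have h1w : (1:ℂ)/w = w⁻¹ := one_div w
    rw [h1w] at hi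
    have hyq : (w+w⁻¹)^2 - (w+w⁻¹) + ((r i : ℝ):ℂ) = 0 := by
      linear_combination -hi
    have hsC : ((ypc (r i) : ℝ):ℂ) + ((ymc (r i):ℝ):ℂ) = 1 := by
      exact_mod_cast yp_add_ym (r i)
    have hpC : ((ypc (r i) : ℝ):ℂ) * ((ymc (r i):ℝ):ℂ) = ((r i : ℝ):ℂ) := by
      exact_mod_cast yp_mul_ym (hrle i)
    have hfac : ((w+w⁻¹) - ((ypc (r i) : ℝ):ℂ)) * ((w+w⁻¹) - ((ymc (r i):ℝ):ℂ)) = 0 := by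
      linear_combination hyq - (w+w⁻¹)*hsC + hpC
    have hquad : ∀ yv : ℝ, w + w⁻¹ = (yv:ℂ) → w = zc yv ∨ w = (zc yv)⁻¹ := by
      intro yv hyv
      apply quad_factor
      have hww : w * w⁻¹ = 1 := mul_inv_cancel₀ hw0
      linear_combination w*hyv - hww
    rcases mul_eq_zero.mp hfac with hc1 | hc1
    · have hyv : w + w⁻¹ = ((ypc (r i) : ℝ):ℂ) := sub_eq_zero.mp hc1
      have hYV : Yv ⟨4*i.1, by have := i.isLt; omega⟩ = ypc (r i) := by
        rw [hYcomp, if_pos (show (4*i.1) % 4 < 2 by omega),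
          hidxcomp _ i (show (4*i.1)/4 = i.1 by omega)]
      rcases hquad _ hyv with hwz | hwz
      · refine ⟨⟨4*i.1, by have := i.isLt; omega⟩, ?_⟩
        rw [haval, if_pos (show (4*i.1) % 2 = 0 by omega), hYV, hwz]
      · refine ⟨⟨4*i.1+1, by have := i.isLt; omega⟩, ?_⟩
        have hYV' : Yv ⟨4*i.1+1, by have := i.isLt; omega⟩ = ypc (r i) := by
          rw [hYcomp, if_pos (show (4*i.1+1) % 4 < 2 by omega),
            hidxcomp _ i (show (4*i.1+1)/4 = i.1 by omega)]
        rw [haval, if_neg (show ¬(4*i.1+1) % 2 = 0 by omega), hYV', hwz]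
    · have hyv : w + w⁻¹ = ((ymc (r i) : ℝ):ℂ) := sub_eq_zero.mp hc1
      rcases hquad _ hyv with hwz | hwz
      · refine ⟨⟨4*i.1+2, by have := i.isLt; omega⟩, ?_⟩
        have hYV : Yv ⟨4*i.1+2, by have := i.isLt; omega⟩ = ymc (r i) := by
          rw [hYcomp, if_neg (show ¬(4*i.1+2) % 4 < 2 by omega),
            hidxcomp _ i (show (4*i.1+2)/4 = i.1 by omega)]
        rw [haval, if_pos (show (4*i.1+2) % 2 = 0 by omega), hYV, hwz]
      · refine ⟨⟨4*i.1+3, by have := i.isLt; omega⟩, ?_⟩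
        have hYV : Yv ⟨4*i.1+3, by have := i.isLt; omega⟩ = ymc (r i) := by
          rw [hYcomp, if_neg (show ¬(4*i.1+3) % 4 < 2 by omega),
            hidxcomp _ i (show (4*i.1+3)/4 = i.1 by omega)]
        rw [haval, if_neg (show ¬(4*i.1+3) % 2 = 0 by omega), hYV, hwz]
  -- injectivity
  have hainj : Function.Injective a := by
    intro m n he
    have hy : Yv m = Yv n := by
      have h1 := hainv m
      rw [he] at h1
      rw [hainv n] at h1
      exact_mod_cast h1.symm
    have hYiff : idx m = idx n ∧ (m.1 % 4 < 2 ↔ n.1 % 4 < 2) := by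
      have he2 := hy
      rw [hYcomp m, hYcomp n] at he2
      by_cases h1 : m.1 % 4 < 2 <;> by_cases h2 : n.1 % 4 < 2
      · rw [if_pos h1, if_pos h2] at he2
        exact ⟨hinj (yp_inj (hrle _) (hrle _) he2), by tauto⟩
      · rw [if_pos h1, if_neg h2] at he2
        exact absurd he2 (by have := ym_lt_half_lt_yp (hrlt (idx m)) (hrlt (idx n)); intro hq; linarith)
      · rw [if_neg h1, if_pos h2] at he2
        exact absurd he2 (by have := ym_lt_half_lt_yp (hrlt (idx n)) (hrlt (idx m)); intro hq; linarith)
      · rw [if_neg h1, if_neg h2] at he2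
        exact ⟨hinj (ym_inj (hrle _) (hrle _) he2), by tauto⟩
    obtain ⟨hidxe, hiff⟩ := hYiff
    have hdiveq : m.1/4 = n.1/4 := by
      have := congrArg Fin.val hidxe
      rw [hidxdef] at this
      exact this
    rw [haval m, haval n, hy] at he
    by_cases hp1 : m.1 % 2 = 0 <;> by_cases hp2 : n.1 % 2 = 0
    · exact Fin.ext (by omega)
    · rw [if_pos hp1, if_neg hp2] at he
      exact absurd he (zc_ne_inv (by rw [← hy]; exact hYsq m))
    · rw [if_neg hp1, if_pos hp2] at he
      exact absurd he.symm (zc_ne_inv (by rw [← hy]; exact hYsq m))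
    · exact Fin.ext (by omega)
  -- α
  have hyp0 : 2 < ypc (r i0) := (yp_bounds0 hr0').1
  set α : ℝ := ypc (r i0)/2 + Real.sqrt ((ypc (r i0))^2 - 4)/2 with hαdef
  have hαgt : 1 < α := zc_real_gt hyp0
  have hzcα : zc (ypc (r i0)) = (α:ℂ) := zc_real hyp0.le
  have hY0 : Yv ⟨0, by omega⟩ = ypc (r i0) := by
    rw [hYcomp, if_pos (show (0:ℕ) % 4 < 2 by omega),
      hidxcomp _ i0 (show (0:ℕ)/4 = (0:ℕ) by omega)]
  have ha0 : a ⟨0, by omega⟩ = (α:ℂ) := by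
    rw [haval, if_pos (show (0:ℕ) % 2 = 0 by omega), hY0, hzcα]
  -- α is a root of f over ℝ
  have hαrootR : aeval α f = 0 := by
    have h1 : aeval ((α:ℝ):ℂ) f = 0 := by
      rw [← ha0]; exact haroot _
    have h2 : algebraMap ℝ ℂ (aeval α f) = 0 := by
      rw [← aeval_algebraMap_apply]; exact h1
    exact (map_eq_zero_iff _ (algebraMap ℝ ℂ).injective).mp h2 -- fix maybe
  -- minpoly
  have hfq : (f.map (algebraMap ℤ ℚ)).Monic := hfmonic.map _
  have hαrootQ : aeval α (f.map (algebraMap ℤ ℚ)) = 0 := by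
    rw [aeval_map_algebraMap]; exact hαrootR
  have hmin : minpoly ℚ α = f.map (algebraMap ℤ ℚ) :=
    (minpoly.eq_of_irreducible_of_monic hirr hαrootQ hfq).symm -- check direction
  have hmindeg : (minpoly ℚ α).natDegree = 4*k := by
    rw [hmin, (hfmonic.natDegree_map _), hfdeg]
  -- roots of minpoly over ℂ are roots of f
  have hminroot : ∀ w : ℂ, aeval w (minpoly ℚ α) = 0 ↔ aeval w f = 0 := by
    intro w
    rw [hmin, aeval_map_algebraMap]
  -- abs of a n for n with small Y
  have habs1 : ∀ n, (Yv n)^2 < 4 → ‖a n‖ = 1 := by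
    intro n hn
    rw [haval n]; split
    · exact zc_abs_one hn.le
    · rw [norm_inv, zc_abs_one hn.le]; norm_num
  refine ⟨α, ⟨hαgt, ⟨f, hfmonic, hαrootR⟩, ?_, ?_⟩, hmin, hmindeg, a, hainj, ?_, ha0, ?_, ?_⟩
  · -- all other conjugates in the closed unit disc
    intro z hz hzα
    obtain ⟨n, hn⟩ := hclass z ((hminroot z).mp hz)
    rcases hYcase n with ⟨hn2, hnY, _, _⟩ | hb
    · -- n.1 < 2
      have hn0 : n.1 ≠ 0 := by
        intro h0
        apply hzα
        rw [hn, ← ha0]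
        congr 1
        exact Fin.ext h0
      have hn1 : n.1 = 1 := by omega
      have : a n = ((α:ℂ))⁻¹ := by
        rw [haval n, if_neg (by omega), hnY, hzcα]
      rw [hn, this, norm_inv]
      rw [show ‖((α:ℝ):ℂ)‖ = |α| by rw [Complex.norm_real, Real.norm_eq_abs]]
      rw [abs_of_pos (by linarith)]
      exact inv_le_one_of_one_le₀ hαgt.le
    · rw [hn, habs1 n hb]
  · -- a root on the unit circle
    refine ⟨a ⟨2, by omega⟩, (hminroot _).mpr (haroot _), ?_⟩
    apply habs1
    have hY2 : Yv ⟨2, by omega⟩ = ymc (r i0) := by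
      rw [hYcomp, if_neg (show ¬(2:ℕ) % 4 < 2 by omega),
        hidxcomp _ i0 (show (2:ℕ)/4 = (0:ℕ) by omega)]
    obtain ⟨hb1, hb2⟩ := ym_bounds0 hr0'
    rw [hY2]; nlinarith
  · -- all a i are roots of minpoly
    intro i
    exact (hminroot _).mpr (haroot i)
  · -- inverse pairs
    intro j
    have hj4 := j.isLt
    have hYmn : Yv ⟨2*j.1+1, by omega⟩ = Yv ⟨2*j.1, by omega⟩ := by
      rw [hYcomp, hYcomp]
      have hidxeq : idx ⟨2*j.1+1, by omega⟩ = idx ⟨2*j.1, by omega⟩ := by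
        rw [hidxdef]
        exact Fin.ext (show (2*j.1+1)/4 = (2*j.1)/4 by omega)
      by_cases hc : (2*j.1) % 4 < 2
      · rw [if_pos (show (2*j.1+1) % 4 < 2 by omega), if_pos hc, hidxeq]
      · rw [if_neg (show ¬(2*j.1+1) % 4 < 2 by omega), if_neg hc, hidxeq]
    rw [haval, haval, if_neg (show ¬(2*j.1+1) % 2 = 0 by omega),
      if_pos (show (2*j.1) % 2 = 0 by omega), hYmn]
  · -- quadruple sums
    intro i
    have hik := i.isLt
    have hY0' : Yv ⟨4*i.1, by omega⟩ = ypc (r i) := by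
      rw [hYcomp, if_pos (show (4*i.1) % 4 < 2 by omega),
        hidxcomp _ i (show (4*i.1)/4 = i.1 by omega)]
    have hY1' : Yv ⟨4*i.1+1, by omega⟩ = ypc (r i) := by
      rw [hYcomp, if_pos (show (4*i.1+1) % 4 < 2 by omega),
        hidxcomp _ i (show (4*i.1+1)/4 = i.1 by omega)]
    have hY2' : Yv ⟨4*i.1+2, by omega⟩ = ymc (r i) := by
      rw [hYcomp, if_neg (show ¬(4*i.1+2) % 4 < 2 by omega),
        hidxcomp _ i (show (4*i.1+2)/4 = i.1 by omega)]
    have hY3' : Yv ⟨4*i.1+3, by omega⟩ = ymc (r i) := by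
      rw [hYcomp, if_neg (show ¬(4*i.1+3) % 4 < 2 by omega),
        hidxcomp _ i (show (4*i.1+3)/4 = i.1 by omega)]
    rw [haval, haval, haval, haval,
      if_pos (show (4*i.1) % 2 = 0 by omega),
      if_neg (show ¬(4*i.1+1) % 2 = 0 by omega),
      if_pos (show (4*i.1+2) % 2 = 0 by omega),
      if_neg (show ¬(4*i.1+3) % 2 = 0 by omega),
      hY0', hY1', hY2', hY3']
    have h1 : zc (ypc (r i)) + (zc (ypc (r i)))⁻¹ = ((ypc (r i) : ℝ) : ℂ) := zc_add_inv _
    have h2 : zc (ymc (r i)) + (zc (ymc (r i)))⁻¹ = ((ymc (r i) : ℝ) : ℂ) := zc_add_inv _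
    have h3 : ((ypc (r i) : ℝ) : ℂ) + ((ymc (r i) : ℝ) : ℂ) = 1 := by
      exact_mod_cast yp_add_ym (r i)
    linear_combination h1 + h2 + h3
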